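/- Let d be a positive integer, e = gcd(d, p^n - 1), C_d = { x^d : x ∈ F_{p^n} }, and let G : F_{p^n} → F_{p^n} be such that F(x) = G(x^d) is a quadratic function. Then F is differentially (e-1)-uniform if and only if the restriction of G to C_d is injective. -/

import Mathlib

open Finset

lemma roots_count (K : Type) [Field K] [Fintype K] [DecidableEq K] (d e : ℕ) (hd : 0 < d)
    (he : e = Nat.gcd d (Fintype.card K - 1)) (he1 : 0 < e) :
    (Finset.univ.filter (fun x : K => x ^ d = 1)).card = e := by
  have hq2 : 1 < Fintype.card K := Fintype.one_lt_card
  have hedvd : e ∣ Fintype.card K - 1 := he ▸ Nat.gcd_dvd_right _ _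
  -- get a primitive e-th root of unity
  obtain ⟨g, hg⟩ := IsCyclic.exists_generator (α := Kˣ)
  have hog : orderOf g = Fintype.card K - 1 := by
    rw [orderOf_eq_card_of_forall_mem_zpowers hg, Nat.card_eq_fintype_card, Fintype.card_units]
  set m := (Fintype.card K - 1) / e with hm
  have hme : m * e = Fintype.card K - 1 := Nat.div_mul_cancel hedvd
  have hζ : orderOf ((g ^ m : Kˣ) : K) = e := by
    rw [orderOf_units, orderOf_pow, hog]
    have hgcd : Nat.gcd (Fintype.card K - 1) m = m := Nat.gcd_eq_right ⟨e, hme.symm⟩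
    rw [hgcd, ← hme, Nat.mul_div_cancel_left _ (Nat.div_pos (Nat.le_of_dvd (by omega) hedvd) he1)]
  have hprim : IsPrimitiveRoot ((g ^ m : Kˣ) : K) e := hζ ▸ IsPrimitiveRoot.orderOf _
  have hcount : (Polynomial.nthRootsFinset e (1 : K)).card = e := hprim.card_nthRootsFinset
  rw [← hcount]
  congr 1
  ext x
  simp only [mem_filter, mem_univ, true_and, Polynomial.mem_nthRootsFinset he1 (1 : K)]
  constructor
  · intro hx
    have hx0 : x ≠ 0 := by
      rintro rfl
      rw [zero_pow hd.ne'] at hx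
      exact zero_ne_one hx
    have h1 : orderOf x ∣ d := orderOf_dvd_of_pow_eq_one hx
    have h2 : orderOf x ∣ Fintype.card K - 1 :=
      orderOf_dvd_of_pow_eq_one (FiniteField.pow_card_sub_one_eq_one x hx0)
    exact orderOf_dvd_iff_pow_eq_one.mp (he ▸ Nat.dvd_gcd h1 h2)
  · intro hx
    obtain ⟨k, hk⟩ : e ∣ d := he ▸ Nat.gcd_dvd_left _ _
    rw [hk, pow_mul, hx, one_pow]

lemma za_count (K : Type) [Field K] [Fintype K] [DecidableEq K] (d e : ℕ) (hd : 0 < d)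
    (he : e = Nat.gcd d (Fintype.card K - 1)) (he1 : 0 < e) (a : K) (ha : a ≠ 0) :
    (Finset.univ.filter (fun x : K => (x + a) ^ d = x ^ d)).card = e - 1 := by
  have hx0 : ∀ x : K, (x + a) ^ d = x ^ d → x ≠ 0 := by
    rintro x hx rfl
    rw [zero_add, zero_pow hd.ne'] at hx
    exact ha (pow_eq_zero_iff hd.ne' |>.mp hx)
  have hcard : ((Finset.univ.filter fun ζ : K => ζ ^ d = 1).erase 1).card = e - 1 := by
    rw [Finset.card_erase_of_mem (by simp), roots_count K d e hd he he1]
  rw [← hcard]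
  apply Finset.card_bij' (fun x _ => (x + a) * x⁻¹) (fun ζ _ => a * (ζ - 1)⁻¹)
  · intro x hx
    simp only [Finset.mem_filter, Finset.mem_univ, true_and] at hx
    have hxne := hx0 x hx
    simp only [Finset.mem_erase, Finset.mem_filter, Finset.mem_univ, true_and]
    constructor
    · intro h
      apply ha
      field_simp at h
      linear_combination h
    · rw [mul_pow, hx, inv_pow, mul_inv_cancel₀ (pow_ne_zero _ hxne)]
  · intro ζ hζ
    simp only [Finset.mem_erase, Finset.mem_filter, Finset.mem_univ, true_and] at hζ
    obtain ⟨hζ1, hζd⟩ := hζ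
    simp only [Finset.mem_filter, Finset.mem_univ, true_and]
    have key : a * (ζ - 1)⁻¹ + a = ζ * (a * (ζ - 1)⁻¹) := by
      field_simp [sub_ne_zero.mpr hζ1]
      ring
    rw [key, mul_pow, hζd, one_mul]
  · intro x hx
    simp only [Finset.mem_filter, Finset.mem_univ, true_and] at hx
    have hxne := hx0 x hx
    field_simp
    simp [ha]
  · intro ζ hζ
    simp only [Finset.mem_erase, Finset.mem_filter, Finset.mem_univ, true_and] at hζ
    obtain ⟨hζ1, hζd⟩ := hζ
    have h1 : (ζ - 1) ≠ 0 := sub_ne_zero.mpr hζ1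
    have hxne : a * (ζ - 1)⁻¹ ≠ 0 := by
      apply mul_ne_zero ha (inv_ne_zero h1)
    field_simp
    ring

theorem stmt3 (p n d : ℕ) (hp : p.Prime) (hn : 0 < n) (hd : 0 < d)
    (K : Type) [Field K] [Fintype K] [DecidableEq K]
    (hcard : Fintype.card K = p ^ n)
    (e : ℕ) (he : e = Nat.gcd d (p ^ n - 1)) (he2 : 2 ≤ e)
    (G : K → K) (F : K → K) (hF : ∀ x : K, F x = G (x ^ d))
    (hquad : ∀ a x y : K,
      F (x + y + a) - F (x + y) = (F (x + a) - F x) + (F (y + a) - F y) - (F a - F 0)) :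
    (∀ a : K, a ≠ 0 → ∀ b : K,
      (Finset.univ.filter (fun x : K => F (x + a) - F x = b)).card ≤ e - 1) ↔
    Set.InjOn G {y : K | ∃ x : K, y = x ^ d} := by
  have he' : e = Nat.gcd d (Fintype.card K - 1) := by rw [he, hcard]
  have he1 : 0 < e := by omega
  have hZ : ∀ a : K, a ≠ 0 →
      (Finset.univ.filter (fun x : K => (x + a) ^ d = x ^ d)).card = e - 1 :=
    fun a ha => za_count K d e hd he' he1 a ha
  constructor
  · rintro hU y1 ⟨u, rfl⟩ y2 ⟨v, rfl⟩ hG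
    by_contra hne
    have huv : u ≠ v := fun h => hne (by rw [h])
    set a := u - v with hadef
    have ha : a ≠ 0 := sub_ne_zero.mpr huv
    have hva : v + a = u := by rw [hadef]; ring
    have hvT : F (v + a) - F v = 0 := by rw [hva, hF, hF, hG, sub_self]
    have hsub : insert v (Finset.univ.filter (fun x : K => (x + a) ^ d = x ^ d)) ⊆
        Finset.univ.filter (fun x : K => F (x + a) - F x = 0) := by
      intro x hx
      simp only [mem_insert, mem_filter, mem_univ, true_and] at hx ⊢
      rcases hx with rfl | hx
      · exact hvT
      · rw [hF, hF, hx, sub_self]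
    have hvnot : v ∉ Finset.univ.filter (fun x : K => (x + a) ^ d = x ^ d) := by
      simp only [mem_filter, mem_univ, true_and]
      rw [hva]
      exact hne
    have hcard2 := Finset.card_le_card hsub
    rw [Finset.card_insert_of_notMem hvnot, hZ a ha] at hcard2
    have := hU a ha 0
    omega
  · intro hinj a ha b
    have key : ∀ x y : K, F (x + y + a) - F (x + y) =
        (F (x + a) - F x) + (F (y + a) - F y) - (F a - F 0) := fun x y => hquad a x y
    have hZeq : Finset.univ.filter (fun x : K => F (x + a) - F x = 0) =
        Finset.univ.filter (fun x : K => (x + a) ^ d = x ^ d) := by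
      ext x
      simp only [mem_filter, mem_univ, true_and]
      constructor
      · intro hx
        apply hinj ⟨x + a, rfl⟩ ⟨x, rfl⟩
        rw [hF, hF] at hx
        linear_combination hx
      · intro hx
        rw [hF, hF, hx, sub_self]
    rcases Finset.eq_empty_or_nonempty
        (Finset.univ.filter (fun x : K => F (x + a) - F x = b)) with hemp | ⟨x1, hx1⟩
    · rw [hemp]; simp
    · have hx1b : F (x1 + a) - F x1 = b := (Finset.mem_filter.mp hx1).2
      have hZne : (Finset.univ.filter (fun x : K => (x + a) ^ d = x ^ d)).Nonempty := by
        rw [← Finset.card_pos, hZ a ha]; omega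
      obtain ⟨x0, hx0⟩ := hZne
      have hx0d : (x0 + a) ^ d = x0 ^ d := (Finset.mem_filter.mp hx0).2
      have hDx0 : F (x0 + a) - F x0 = 0 := by rw [hF, hF, hx0d, sub_self]
      have hmap : ∀ x ∈ Finset.univ.filter (fun x : K => F (x + a) - F x = b),
          x - x1 + x0 ∈ Finset.univ.filter (fun x : K => F (x + a) - F x = 0) := by
        intro x hx
        have hxb : F (x + a) - F x = b := (Finset.mem_filter.mp hx).2
        have h1 : F (x - x1 + a) - F (x - x1) = F a - F 0 := by
          have h := key (x - x1) x1
          rw [sub_add_cancel] at h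
          linear_combination hxb - h - hx1b
        simp only [mem_filter, mem_univ, true_and]
        have h3 := key (x - x1) x0
        linear_combination h3 + h1 + hDx0
      have hinj2 : Set.InjOn (fun x : K => x - x1 + x0)
          (Finset.univ.filter (fun x : K => F (x + a) - F x = b)) := by
        intro x _ y _ h
        simpa using h
      calc (Finset.univ.filter (fun x : K => F (x + a) - F x = b)).card
          ≤ (Finset.univ.filter (fun x : K => F (x + a) - F x = 0)).card :=
            Finset.card_le_card_of_injOn _ hmap hinj2
        _ = e - 1 := by rw [hZeq, hZ a ha]
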